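/- Let M be an mtt that is finite copying in the parameters with copying bound c, let t ∈ T_Δ be a fixed output tree, and let run_OI be defined from M, t and c as in the context. Then for every s ∈ T_Σ: (s,t) ∈ τ_{OI,M} if and only if (q0, (), t) ∈ run_OI(s), where () is the empty parameter vector and t itself is the root subtree of t. -/

import Mathlib

namespace MttF

/-- Finite ordered trees over a label type `α`. -/
inductive RTree (α : Type) : Type
  | node : α → List (RTree α) → RTree α

namespace RTree

variable {α β : Type}

/-- The root label of a tree. -/
def label : RTree α → α
  | node a _ => a

/-- The list of immediate subtrees of a tree. -/
def children : RTree α → List (RTree α)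
  | node _ ts => ts

/-- Relabelling of trees. -/
def map (f : α → β) : RTree α → RTree β
  | node a ts => node (f a) (ts.attach.map (fun x => map f x.1))
decreasing_by
  have := List.sizeOf_lt_of_mem x.2
  simp only [node.sizeOf_spec]
  omega

/-- A tree is well-formed with respect to a rank function if every node labeled
by a rank-`k` symbol has exactly `k` children. `T_Σ` is the set of well-formed
trees over `Σ`. -/
inductive Wf (rk : α → ℕ) : RTree α → Prop
  | node {a : α} {ts : List (RTree α)} :
      ts.length = rk a → (∀ t ∈ ts, Wf rk t) → Wf rk (node a ts)

/-- `Subtree u t` holds iff `u` is a subtree of `t` (rooted at some node of `t`). -/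
inductive Subtree : RTree α → RTree α → Prop
  | refl (t : RTree α) : Subtree t t
  | step {u c : RTree α} {a : α} {ts : List (RTree α)} :
      c ∈ ts → Subtree u c → Subtree u (node a ts)

end RTree

/-- Labels for output trees with parameters: trees over `Δ ∪ Y`. -/
inductive OLab (Δ : Type) : Type
  | out (d : Δ)
  | param (i : ℕ)

/-- Labels for right-hand sides of mtt rules: trees over `Δ ∪ (Q × X) ∪ Y`
(the second component of a call is the index of the input variable `x`). -/
inductive RLab (Δ Q : Type) : Type
  | out (d : Δ)
  | call (q : Q) (x : ℕ)
  | param (i : ℕ)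

/-- Labels for "semantic" trees over `Δ ∪ (Q × T_Σ) ∪ Y`. -/
inductive SLab (Γ Δ Q : Type) : Type
  | out (d : Δ)
  | call (q : Q) (s : RTree Γ)
  | param (i : ℕ)

/-- Trees over `Δ ∪ Y`. -/
abbrev OT (Δ : Type) := RTree (OLab Δ)
/-- Right-hand side trees over `Δ ∪ (Q × X) ∪ Y`. -/
abbrev Rhs (Δ Q : Type) := RTree (RLab Δ Q)
/-- Trees over `Δ ∪ (Q × T_Σ) ∪ Y`. -/
abbrev ST (Γ Δ Q : Type) := RTree (SLab Γ Δ Q)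

/-- First-order substitution `x_i := ss_i` on a label of a right-hand side
(indices are 0-based; for well-formed rules the index is always in range). -/
def RLab.subst {Γ Δ Q : Type} (ss : List (RTree Γ)) : RLab Δ Q → SLab Γ Δ Q
  | .out d => .out d
  | .param i => .param i
  | .call q x =>
    match ss[x]? with
    | some s => .call q s
    | none => .param x

/-- `r[x_1/s_1, …, x_k/s_k]`. -/
def substX {Γ Δ Q : Type} (ss : List (RTree Γ)) (r : Rhs Δ Q) : ST Γ Δ Q :=
  r.map (RLab.subst ss)

/-- Second-order (parameter) substitution `t[y_1/ts_1, …, y_n/ts_n]`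
(`y` indices are 0-based). -/
def substY {Δ : Type} (ts : List (OT Δ)) : OT Δ → OT Δ
  | .node (.param i) _ => ts.getD i (.node (.param i) [])
  | .node (.out d) us => .node (.out d) (us.attach.map (fun x => substY ts x.1))
decreasing_by
  have := List.sizeOf_lt_of_mem x.2
  simp only [RTree.node.sizeOf_spec]
  omega

/-- The embedding of `T_Δ` into the trees over `Δ ∪ Y`. -/
def embed {Δ : Type} (t : RTree Δ) : OT Δ := t.map OLab.out

variable {Γ Δ Q : Type}

/-- IO (call-by-value, inside-out) semantics: `SemIO rsel u t` holds iff
`t ∈ ⟦u⟧_IO`.  The rules of the transducer are given by a selector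
`rsel q σ ss`: the set of right-hand sides of the `⟨q,σ⟩`-rules that are
applicable when the children of the current input node are `ss` (for a plain
mtt this does not depend on `ss`, cf. `plainSel`). -/
inductive SemIO (rsel : Q → Γ → List (RTree Γ) → Set (Rhs Δ Q)) :
    ST Γ Δ Q → OT Δ → Prop
  | param (i : ℕ) :
      SemIO rsel (.node (.param i) []) (.node (.param i) [])
  | out {d : Δ} {us : List (ST Γ Δ Q)} {ts : List (OT Δ)}
      (hlen : ts.length = us.length)
      (h : ∀ i : Fin us.length, SemIO rsel (us.get i) (ts.get (i.cast hlen.symm))) :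
      SemIO rsel (.node (.out d) us) (.node (.out d) ts)
  | call {q : Q} {σ : Γ} {ss : List (RTree Γ)} {us : List (ST Γ Δ Q)}
      {r : Rhs Δ Q} {t₀ : OT Δ} {ts : List (OT Δ)}
      (hr : r ∈ rsel q σ ss)
      (h₀ : SemIO rsel (substX ss r) t₀)
      (hlen : ts.length = us.length)
      (h : ∀ i : Fin us.length, SemIO rsel (us.get i) (ts.get (i.cast hlen.symm))) :
      SemIO rsel (.node (.call q (.node σ ss)) us) (substY ts t₀)

mutual
/-- OI (call-by-name, outside-in) semantics: `SemOI rsel u t` holds iff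
`t ∈ ⟦u⟧_OI`. -/
inductive SemOI (rsel : Q → Γ → List (RTree Γ) → Set (Rhs Δ Q)) :
    ST Γ Δ Q → OT Δ → Prop
  | param (i : ℕ) :
      SemOI rsel (.node (.param i) []) (.node (.param i) [])
  | out {d : Δ} {us : List (ST Γ Δ Q)} {ts : List (OT Δ)}
      (hlen : ts.length = us.length)
      (h : ∀ i : Fin us.length, SemOI rsel (us.get i) (ts.get (i.cast hlen.symm))) :
      SemOI rsel (.node (.out d) us) (.node (.out d) ts)
  | call {q : Q} {σ : Γ} {ss : List (RTree Γ)} {us : List (ST Γ Δ Q)}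
      {r : Rhs Δ Q} {t₀ : OT Δ} {t : OT Δ}
      (hr : r ∈ rsel q σ ss)
      (h₀ : SemOI rsel (substX ss r) t₀)
      (hs : OISub rsel us t₀ t) :
      SemOI rsel (.node (.call q (.node σ ss)) us) t

/-- OI-substitution: `OISub rsel us t₀ t` holds iff `t ∈ (t₀ ←_OI (⟦us_1⟧_OI, …, ⟦us_n⟧_OI))`,
i.e. `t` is obtained from `t₀` by independently replacing every occurrence of a parameter
`y_i` by some member of `⟦us_i⟧_OI`. -/
inductive OISub (rsel : Q → Γ → List (RTree Γ) → Set (Rhs Δ Q)) :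
    List (ST Γ Δ Q) → OT Δ → OT Δ → Prop
  | param {us : List (ST Γ Δ Q)} {i : ℕ} {t : OT Δ}
      (h : i < us.length) (hsem : SemOI rsel (us.get ⟨i, h⟩) t) :
      OISub rsel us (.node (.param i) []) t
  | out {us : List (ST Γ Δ Q)} {d : Δ} {ts ts' : List (OT Δ)}
      (hlen : ts'.length = ts.length)
      (h : ∀ i : Fin ts.length, OISub rsel us (ts.get i) (ts'.get (i.cast hlen.symm))) :
      OISub rsel us (.node (.out d) ts) (.node (.out d) ts')
end

/-- The rule selector of a plain mtt: the applicable rules do not depend on the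
child subtrees of the current input node. -/
def plainSel (rules : Q → Γ → Set (Rhs Δ Q)) :
    Q → Γ → List (RTree Γ) → Set (Rhs Δ Q) :=
  fun q σ _ => rules q σ

/-- The translation `τ_{IO,M} ⊆ T_Σ × T_Δ` realized in IO mode. -/
def tauIO (rankΓ : Γ → ℕ) (rankΔ : Δ → ℕ)
    (rsel : Q → Γ → List (RTree Γ) → Set (Rhs Δ Q)) (q₀ : Q) :
    Set (RTree Γ × RTree Δ) :=
  {p | p.1.Wf rankΓ ∧ p.2.Wf rankΔ ∧
       SemIO rsel (.node (.call q₀ p.1) []) (embed p.2)}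

/-- The translation `τ_{OI,M} ⊆ T_Σ × T_Δ` realized in OI mode. -/
def tauOI (rankΓ : Γ → ℕ) (rankΔ : Δ → ℕ)
    (rsel : Q → Γ → List (RTree Γ) → Set (Rhs Δ Q)) (q₀ : Q) :
    Set (RTree Γ × RTree Δ) :=
  {p | p.1.Wf rankΓ ∧ p.2.Wf rankΔ ∧
       SemOI rsel (.node (.call q₀ p.1) []) (embed p.2)}

/-- Well-formedness of a right-hand side of a rule of an mtt whose current
input symbol has rank `k` and whose current state has rank `m`: output symbols
have the correct number of children, state calls `⟨q', x_i⟩` have `rank q'`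
children and `i < k`, and parameters `y_j` satisfy `j < m`. -/
inductive RhsWf (rankΔ : Δ → ℕ) (rankQ : Q → ℕ) (k m : ℕ) : Rhs Δ Q → Prop
  | out {d : Δ} {ts : List (Rhs Δ Q)}
      (hlen : ts.length = rankΔ d) (h : ∀ t ∈ ts, RhsWf rankΔ rankQ k m t) :
      RhsWf rankΔ rankQ k m (.node (.out d) ts)
  | call {q : Q} {x : ℕ} {ts : List (Rhs Δ Q)}
      (hx : x < k) (hlen : ts.length = rankQ q)
      (h : ∀ t ∈ ts, RhsWf rankΔ rankQ k m t) :
      RhsWf rankΔ rankQ k m (.node (.call q x) ts)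
  | param {i : ℕ} (hi : i < m) : RhsWf rankΔ rankQ k m (.node (.param i) [])

/-- Well-formedness of a tree over `Δ ∪ (Q × T_Σ) ∪ Y`. -/
inductive STWf (rankΓ : Γ → ℕ) (rankΔ : Δ → ℕ) (rankQ : Q → ℕ) : ST Γ Δ Q → Prop
  | out {d : Δ} {ts : List (ST Γ Δ Q)}
      (hlen : ts.length = rankΔ d) (h : ∀ t ∈ ts, STWf rankΓ rankΔ rankQ t) :
      STWf rankΓ rankΔ rankQ (.node (.out d) ts)
  | call {q : Q} {s : RTree Γ} {ts : List (ST Γ Δ Q)}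
      (hs : s.Wf rankΓ) (hlen : ts.length = rankQ q)
      (h : ∀ t ∈ ts, STWf rankΓ rankΔ rankQ t) :
      STWf rankΓ rankΔ rankQ (.node (.call q s) ts)
  | param (i : ℕ) : STWf rankΓ rankΔ rankQ (.node (.param i) [])

/-- A tree over `Δ ∪ (Q × T_Σ) ∪ Y` is parameter-free if no `y_i` occurs in it. -/
inductive NoParam : ST Γ Δ Q → Prop
  | node {l : SLab Γ Δ Q} {ts : List (ST Γ Δ Q)}
      (hl : ∀ i : ℕ, l ≠ .param i) (h : ∀ t ∈ ts, NoParam t) :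
      NoParam (.node l ts)

/-- A macro tree transducer `M = (Q, Σ, Δ, q₀, R)`.  The alphabets `Γ` (input),
`Δ` (output) and the set `Q` of states are ranked; `q₀` has rank `0`; `rules q σ`
is the (finite) set `R_{q,σ}` of right-hand sides of the `⟨q,σ⟩`-rules, and every
right-hand side is a well-formed tree over `Δ ∪ (Q × X_k) ∪ Y_m`. -/
structure MTT (Γ Δ Q : Type) where
  rankΓ : Γ → ℕ
  rankΔ : Δ → ℕ
  rankQ : Q → ℕ
  q₀ : Q
  q₀_rank : rankQ q₀ = 0
  rules : Q → Γ → Set (Rhs Δ Q)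
  rules_fin : ∀ q σ, (rules q σ).Finite
  rules_wf : ∀ q σ, ∀ r ∈ rules q σ, RhsWf rankΔ rankQ (rankΓ σ) (rankQ q) r

/-- The rule selector of a plain mtt. -/
def MTT.sel (M : MTT Γ Δ Q) : Q → Γ → List (RTree Γ) → Set (Rhs Δ Q) :=
  plainSel M.rules

end MttF
namespace MttF

/-- The number of occurrences of the parameter `y_i` in a tree over `Δ ∪ Y`. -/
def countParam {Δ : Type} (i : ℕ) : OT Δ → ℕ
  | .node (.param j) _ => if j = i then 1 else 0
  | .node (.out _) ts => (ts.attach.map (fun x => countParam i x.1)).sum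
decreasing_by
  have := List.sizeOf_lt_of_mem x.2
  simp only [RTree.node.sizeOf_spec]
  omega

/-- The argument list `(y_1, …, y_m)`. -/
def paramArgs {Γ Δ Q : Type} (m : ℕ) : List (ST Γ Δ Q) :=
  (List.range m).map (fun i => .node (.param i) [])

/-- `M` is finite copying in the parameters with copying bound `c`: for every
state `q` of rank `k`, every `s ∈ T_Σ`, and every `u ∈ ⟦⟨q,s⟩(y_1,…,y_k)⟧_OI`,
the number of occurrences of `y_i` in `u` is at most `c`. -/
def FinCopyP {Γ Δ Q : Type} (M : MTT Γ Δ Q) (c : ℕ) : Prop :=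
  ∀ (q : Q) (s : RTree Γ), s.Wf M.rankΓ →
    ∀ u : OT Δ, SemOI M.sel (.node (.call q s) (paramArgs (M.rankQ q))) u →
      ∀ i < M.rankQ q, countParam i u ≤ c

/-- Triples `(q, β⃗, v') ∈ ⋃_i Q^{(i)} × P_c(V_t)^i × V_t`. -/
abbrev TripOI (Δ Q : Type) := Q × List (Set (RTree Δ)) × RTree Δ

/-- `β ∈ P_c(V_t)`: a set of at most `c` subtrees of `t`. -/
def SmallSet {Δ : Type} (t : RTree Δ) (c : ℕ) (β : Set (RTree Δ)) : Prop :=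
  (∀ w ∈ β, RTree.Subtree w t) ∧ β.ncard ≤ c

/-- The predicate `f_{β⃗,a⃗}(r, v')` of the inverse-type construction for
OI-mtts that are finite copying in the parameters. -/
inductive FPredOI {Δ Q : Type} (t : RTree Δ) (βs : List (Set (RTree Δ)))
    (aenv : List (Set (TripOI Δ Q))) : Rhs Δ Q → RTree Δ → Prop
  | param {i : ℕ} {v : RTree Δ} {β : Set (RTree Δ)}
      (h : βs[i]? = some β) (hv : v ∈ β) :
      FPredOI t βs aenv (.node (.param i) []) v
  | out {d : Δ} {rs : List (Rhs Δ Q)} {ws : List (RTree Δ)}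
      (hlen : ws.length = rs.length)
      (h : ∀ i : Fin rs.length, FPredOI t βs aenv (rs.get i) (ws.get (i.cast hlen.symm))) :
      FPredOI t βs aenv (.node (.out d) rs) (.node d ws)
  | call {q' : Q} {x : ℕ} {rs : List (Rhs Δ Q)} {v : RTree Δ}
      (γs : List (Set (RTree Δ)))
      (hlen : γs.length = rs.length)
      (ha : (q', γs, v) ∈ aenv.getD x ∅)
      (h : ∀ i : Fin rs.length, ∀ u ∈ γs.get (i.cast hlen.symm),
            FPredOI t βs aenv (rs.get i) u) :
      FPredOI t βs aenv (.node (.call q' x) rs) v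

/-- The run `run_OI(s)` of the inverse-type automaton of an OI-mtt that is
finite copying in the parameters with bound `c`, for the fixed output tree `t`:
`run_OI(σ(s_1,…,s_k)) = {(q, β⃗, v') | ∃ r ∈ R_{q,σ}: f_{β⃗,(run_OI(s_1),…,run_OI(s_k))}(r, v')}`. -/
def runOI {Γ Δ Q : Type} (rankQ : Q → ℕ)
    (rsel : Q → Γ → List (RTree Γ) → Set (Rhs Δ Q)) (t : RTree Δ) (c : ℕ) :
    RTree Γ → Set (TripOI Δ Q)
  | .node σ ss =>
      {trip | trip.2.1.length = rankQ trip.1 ∧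
        (∀ β ∈ trip.2.1, SmallSet t c β) ∧ RTree.Subtree trip.2.2 t ∧
        ∃ r ∈ rsel trip.1 σ ss,
          FPredOI t trip.2.1 (ss.attach.map (fun x => runOI rankQ rsel t c x.1)) r trip.2.2}
decreasing_by
  have := List.sizeOf_lt_of_mem x.2
  simp only [RTree.node.sizeOf_spec]
  omega

end MttF

namespace MttF

variable {Γ Δ Q : Type}

theorem RTree.map_node' {α β : Type} (f : α → β) (a : α) (ts : List (RTree α)) :
    RTree.map f (RTree.node a ts) = RTree.node (f a) (ts.map (RTree.map f)) := by
  rw [RTree.map]; simp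

theorem substX_node (ss : List (RTree Γ)) (l : RLab Δ Q) (rs : List (Rhs Δ Q)) :
    substX ss (.node l rs) = .node (RLab.subst ss l) (rs.map (substX ss)) :=
  RTree.map_node' _ _ _

theorem countParam_out {i : ℕ} {d : Δ} {ts : List (OT Δ)} :
    countParam i (.node (.out d) ts) = (ts.map (countParam i)).sum := by
  rw [countParam]; simp

theorem countParam_param {i j : ℕ} {ts : List (OT Δ)} :
    countParam i (RTree.node (OLab.param j) ts : OT Δ) = if j = i then 1 else 0 := by
  rw [countParam]

theorem paramArgs_length (m : ℕ) : (paramArgs (Γ := Γ) (Δ := Δ) (Q := Q) m).length = m := by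
  simp [paramArgs]

theorem paramArgs_get (m : ℕ) {i : ℕ} (h : i < (paramArgs (Γ := Γ) (Δ := Δ) (Q := Q) m).length) :
    (paramArgs (Γ := Γ) (Δ := Δ) (Q := Q) m).get ⟨i, h⟩ = .node (.param i) [] := by
  simp [paramArgs]

theorem Subtree.trans' {α : Type} {a b c : RTree α} (h1 : RTree.Subtree a b)
    (h2 : RTree.Subtree b c) : RTree.Subtree a c := by
  induction h2 with
  | refl => exact h1
  | step hm _ ih => exact .step hm ih

theorem Subtree.of_mem {α : Type} {u : RTree α} {a : α} {ts : List (RTree α)} (h : u ∈ ts) :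
    RTree.Subtree u (RTree.node a ts) := .step h (.refl u)

theorem attach_map_getD {α β : Type} (ss : List α) (f : α → Set β) {x : ℕ}
    (h : x < ss.length) :
    (ss.attach.map (fun y => f y.1)).getD x ∅ = f (ss[x]'h) := by
  rw [List.getD_eq_getElem?_getD, List.getElem?_eq_getElem (by simpa using h)]
  simp

theorem RTree.strongInd {α : Type} {P : RTree α → Prop}
    (ih : ∀ (a : α) (ts : List (RTree α)), (∀ x ∈ ts, P x) → P (.node a ts)) :
    ∀ t, P t
  | .node a ts => ih a ts (fun x hx => RTree.strongInd ih x)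
decreasing_by
  have := List.sizeOf_lt_of_mem hx
  simp only [RTree.node.sizeOf_spec]
  omega

/-- All parameters occurring in an output tree are `< m`. -/
inductive PLT (m : ℕ) : OT Δ → Prop
  | out {d : Δ} {ts : List (OT Δ)} (h : ∀ x ∈ ts, PLT m x) : PLT m (.node (.out d) ts)
  | param {i : ℕ} (hi : i < m) : PLT m (.node (.param i) [])

/-- All parameters occurring in a semantic tree are `< m`. -/
inductive SPLT (m : ℕ) : ST Γ Δ Q → Prop
  | out {d : Δ} {ts : List (ST Γ Δ Q)} (h : ∀ x ∈ ts, SPLT m x) : SPLT m (.node (.out d) ts)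
  | call {q : Q} {s : RTree Γ} {ts : List (ST Γ Δ Q)} (h : ∀ x ∈ ts, SPLT m x) :
      SPLT m (.node (.call q s) ts)
  | param {i : ℕ} {ts : List (ST Γ Δ Q)} (hi : i < m) : SPLT m (.node (.param i) ts)

theorem sem_plt {rsel : Q → Γ → List (RTree Γ) → Set (Rhs Δ Q)} {m : ℕ} {st : ST Γ Δ Q}
    {u : OT Δ} (h : SemOI rsel st u) : SPLT m st → PLT m u := by
  refine SemOI.rec (rsel := rsel)
    (motive_1 := fun st u _ => SPLT m st → PLT m u)
    (motive_2 := fun us t₀ u _ => (∀ x ∈ us, SPLT m x) → PLT m u)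
    ?_ ?_ ?_ ?_ ?_ h
  · intro i hs
    exact PLT.param (by cases hs; assumption)
  · intro d us ts hlen hsem ih hs
    cases hs with
    | out h =>
      refine PLT.out (fun x hx => ?_)
      obtain ⟨i, hi⟩ := List.get_of_mem hx
      subst hi
      exact ih (i.cast hlen) (h _ (List.get_mem us _))
  · intro q σ ss us r t₀ u hr h₀ hs ih₀ ihs hsp
    cases hsp with
    | call h => exact ihs h
  · intro us i u h hsem ih hall
    exact ih (hall _ (List.get_mem us _))
  · intro us d ts ts' hlen hptw ih hall
    refine PLT.out (fun x hx => ?_)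
    obtain ⟨i, hi⟩ := List.get_of_mem hx
    subst hi
    exact ih (i.cast hlen) hall

theorem rhsWf_splt {rankΔ : Δ → ℕ} {rankQ : Q → ℕ} {k m : ℕ} {r : Rhs Δ Q}
    (hr : RhsWf rankΔ rankQ k m r) (ss : List (RTree Γ)) (hk : k ≤ ss.length) :
    SPLT m (substX ss r) := by
  induction hr with
  | out hlen h ih =>
      rw [substX_node]
      exact SPLT.out (fun x hx => by
        obtain ⟨y, hy, rfl⟩ := List.mem_map.1 hx; exact ih y hy)
  | call hx hlen h ih =>
      rename_i q x ts
      rw [substX_node]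
      have hx' : x < ss.length := lt_of_lt_of_le hx hk
      have hsub : RLab.subst (Δ := Δ) (Q := Q) ss (.call q x) = .call q (ss[x]'hx') := by
        simp [RLab.subst, List.getElem?_eq_getElem hx']
      rw [hsub]
      exact SPLT.call (fun y hym => by
        obtain ⟨z, hz, rfl⟩ := List.mem_map.1 hym; exact ih z hz)
  | param hi =>
      rw [substX_node]
      exact SPLT.param hi

/-- `PSub βs u v`: `v` is obtained from `u` by replacing each occurrence of a
parameter `y_i` by some element of `β_i`. -/
inductive PSub (βs : List (Set (RTree Δ))) : OT Δ → RTree Δ → Prop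
  | param {i : ℕ} {β : Set (RTree Δ)} {w : RTree Δ}
      (h : βs[i]? = some β) (hw : w ∈ β) : PSub βs (.node (.param i) []) w
  | out {d : Δ} {us : List (OT Δ)} {ws : List (RTree Δ)}
      (hlen : ws.length = us.length)
      (h : ∀ i : Fin us.length, PSub βs (us.get i) (ws.get (i.cast hlen.symm))) :
      PSub βs (.node (.out d) us) (.node d ws)

theorem psub_embed {βs : List (Set (RTree Δ))} : ∀ (w : RTree Δ), PSub βs (embed w) w := by
  refine RTree.strongInd (fun d ws ihw => ?_)
  rw [embed, RTree.map_node']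
  refine PSub.out (by simp) (fun i => ?_)
  have hi : i.1 < ws.length := by simpa using i.isLt
  have h1 : (ws.map (RTree.map OLab.out)).get i = embed (ws.get ⟨i.1, hi⟩) := by
    simp [embed]
  rw [h1]
  exact ihw _ (List.get_mem ws ⟨i.1, hi⟩)

theorem psub_nil {u : OT Δ} {v : RTree Δ} (h : PSub [] u v) : u = embed v := by
  induction h with
  | param h hw => simp at h
  | out hlen h ih =>
      rw [embed, RTree.map_node']
      congr 1
      refine List.ext_get (by simpa using hlen.symm) (fun n h1 h2 => ?_)
      have := ih ⟨n, h1⟩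
      rw [this]
      simp [embed]

theorem psub_mono {βs βs' : List (Set (RTree Δ))}
    (hm : ∀ (i : ℕ) (β : Set (RTree Δ)), βs[i]? = some β →
      ∃ β' : Set (RTree Δ), βs'[i]? = some β' ∧ β ⊆ β')
    {u : OT Δ} {v : RTree Δ} (h : PSub βs u v) : PSub βs' u v := by
  induction h with
  | param h hw =>
      obtain ⟨β', hβ', hsub⟩ := hm _ _ h
      exact PSub.param hβ' (hsub hw)
  | out hlen h ih => exact PSub.out hlen ih

theorem oisub_paramArgs {rsel : Q → Γ → List (RTree Γ) → Set (Rhs Δ Q)} {m : ℕ}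
    {t₀ : OT Δ} (h : PLT m t₀) : OISub rsel (paramArgs m) t₀ t₀ := by
  induction h with
  | out h ih =>
      refine OISub.out rfl (fun i => ?_)
      exact ih _ (List.get_mem _ _)
  | param hi =>
      rename_i i
      have hlen : i < (paramArgs (Γ := Γ) (Δ := Δ) (Q := Q) m).length := by
        rwa [paramArgs_length]
      refine OISub.param hlen ?_
      rw [paramArgs_get]
      exact SemOI.param _

theorem oisub_nil_eq {rsel : Q → Γ → List (RTree Γ) → Set (Rhs Δ Q)} :
    ∀ (t₀ : OT Δ) {u : OT Δ}, OISub rsel [] t₀ u → u = t₀ := by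
  refine RTree.strongInd (P := fun t₀ => ∀ {u : OT Δ}, OISub rsel [] t₀ u → u = t₀)
    (fun l ts iht u h => ?_)
  cases h with
  | param hi hsem => exact absurd hi (by simp)
  | out hlen hptw =>
      congr 1
      refine List.ext_get (by simpa using hlen) (fun n h1 h2 => ?_)
      exact iht _ (List.get_mem ts ⟨n, h2⟩) (hptw ⟨n, h2⟩)

theorem getD_replicate_empty {α : Type} {n k : ℕ} :
    (List.replicate n (∅ : Set α)).getD k ∅ = ∅ := by
  rcases lt_or_ge k n with h | h
  · rw [List.getD_eq_getElem _ _ (by simpa using h)]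
    simp
  · rw [List.getD_eq_default _ _ (by simpa using h)]

theorem getD_zipWith_union {a b : List (Set (RTree Δ))} (hab : a.length = b.length) (k : ℕ) :
    (List.zipWith (· ∪ ·) a b).getD k ∅ = a.getD k ∅ ∪ b.getD k ∅ := by
  rcases lt_or_ge k a.length with h | h
  · rw [List.getD_eq_getElem _ _ (by simp; omega), List.getD_eq_getElem _ _ h,
      List.getD_eq_getElem _ _ (by omega), List.getElem_zipWith]
  · rw [List.getD_eq_default _ _ (by simp; omega), List.getD_eq_default _ _ h,
      List.getD_eq_default _ _ (by omega)]
    simp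

theorem getElem?_zipWith_union {a b : List (Set (RTree Δ))} (hab : a.length = b.length)
    {k : ℕ} (hk : k < a.length) :
    (List.zipWith (· ∪ ·) a b)[k]? = some (a.getD k ∅ ∪ b.getD k ∅) := by
  rw [List.getElem?_eq_getElem (by simp; omega), List.getElem_zipWith]
  rw [List.getD_eq_getElem _ _ hk, List.getD_eq_getElem _ _ (by omega)]

/-- Composition of an OI-substitution with a `PSub` substitution. -/
inductive CompSub (rsel : Q → Γ → List (RTree Γ) → Set (Rhs Δ Q)) (us : List (ST Γ Δ Q))
    (βs : List (Set (RTree Δ))) : OT Δ → RTree Δ → Prop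
  | param {i : ℕ} {st : ST Γ Δ Q} {u' : OT Δ} {w : RTree Δ}
      (h : us[i]? = some st) (hsem : SemOI rsel st u') (hp : PSub βs u' w) :
      CompSub rsel us βs (.node (.param i) []) w
  | out {d : Δ} {ts : List (OT Δ)} {ws : List (RTree Δ)}
      (hlen : ws.length = ts.length)
      (h : ∀ i : Fin ts.length, CompSub rsel us βs (ts.get i) (ws.get (i.cast hlen.symm))) :
      CompSub rsel us βs (.node (.out d) ts) (.node d ws)

theorem comp_intro {rsel : Q → Γ → List (RTree Γ) → Set (Rhs Δ Q)}
    {βs : List (Set (RTree Δ))} :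
    ∀ (t₀ : OT Δ) {us : List (ST Γ Δ Q)} {u : OT Δ} {v : RTree Δ},
      OISub rsel us t₀ u → PSub βs u v → CompSub rsel us βs t₀ v := by
  refine RTree.strongInd (P := fun t₀ => ∀ {us u v},
    OISub rsel us t₀ u → PSub βs u v → CompSub rsel us βs t₀ v) (fun l ts iht us u v ho hp => ?_)
  cases ho with
  | param hi hsem =>
      exact CompSub.param (List.getElem?_eq_getElem hi) hsem hp
  | out hlen hptw =>
      cases hp with
      | out hlen2 hp2 =>
          rename_i d ts' ws
          refine CompSub.out (hlen := by omega) (fun i => ?_)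
          exact iht _ (List.get_mem ts i) (hptw i) (hp2 (i.cast hlen.symm))

theorem psub_compose {rsel : Q → Γ → List (RTree Γ) → Set (Rhs Δ Q)}
    {βs : List (Set (RTree Δ))} {m : ℕ} {γs : List (Set (RTree Δ))} {args : List (ST Γ Δ Q)}
    (hlen : γs.length = args.length)
    (hst : ∀ (k : ℕ) (hk : k < args.length), ∀ w ∈ γs.getD k ∅,
      ∃ u', SemOI rsel (args[k]'hk) u' ∧ PLT m u' ∧ PSub βs u' w)
    {t₀ : OT Δ} {v : RTree Δ} (hp : PSub γs t₀ v) :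
    ∃ u, OISub rsel args t₀ u ∧ PLT m u ∧ PSub βs u v := by
  induction hp with
  | param h hw =>
      rename_i i β w
      have hi : i < γs.length := by
        by_contra hc
        rw [List.getElem?_eq_none (by omega)] at h
        simp at h
      have hik : i < args.length := by omega
      have hg : γs.getD i ∅ = β := by
        rw [List.getD_eq_getElem?_getD, h]; rfl
      obtain ⟨u', hsem, hplt, hps⟩ := hst i hik w (by rw [hg]; exact hw)
      exact ⟨u', OISub.param hik hsem, hplt, hps⟩
  | out hlen2 h ih =>
      rename_i d us ws
      choose f hf1 hf2 hf3 using ih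
      refine ⟨.node (.out d) (List.ofFn f), OISub.out (by simp) (fun i => ?_),
        PLT.out (fun x hx => ?_), PSub.out (by simp [hlen2]) (fun i => ?_)⟩
      · rw [List.get_ofFn]
        exact hf1 _
      · obtain ⟨i, rfl⟩ := List.mem_ofFn.1 hx
        exact hf2 i
      · have hi : i.1 < us.length := by simpa using i.isLt
        have h1 : (List.ofFn f).get i = f ⟨i.1, hi⟩ := by
          rw [List.get_ofFn]
          exact congrArg f (Fin.ext rfl)
        rw [h1]
        exact hf3 ⟨i.1, hi⟩

theorem combine_gammas {n : ℕ} (Rest : ℕ → RTree Δ → Prop) :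
    ∀ (ts : List (OT Δ)) (ws : List (RTree Δ)) (hlen : ws.length = ts.length),
    (∀ (i : ℕ) (hi : i < ts.length), ∃ γs : List (Set (RTree Δ)), γs.length = n ∧
      (∀ k w, w ∈ γs.getD k ∅ → RTree.Subtree w (ws[i]'(by omega)) ∧ Rest k w) ∧
      (∀ k, (γs.getD k ∅).Finite ∧ (γs.getD k ∅).ncard ≤ countParam k (ts[i]'hi)) ∧
      PSub γs (ts[i]'hi) (ws[i]'(by omega))) →
    ∃ γs : List (Set (RTree Δ)), γs.length = n ∧
      (∀ k w, w ∈ γs.getD k ∅ →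
        (∃ (i : ℕ) (hi : i < ws.length), RTree.Subtree w (ws[i]'hi)) ∧ Rest k w) ∧
      (∀ k, (γs.getD k ∅).Finite ∧ (γs.getD k ∅).ncard ≤ (ts.map (countParam k)).sum) ∧
      (∀ (i : ℕ) (hi : i < ts.length), PSub γs (ts[i]'hi) (ws[i]'(by omega))) := by
  intro ts
  induction ts with
  | nil =>
      intro ws hlen _
      refine ⟨List.replicate n ∅, by simp, ?_, ?_, ?_⟩
      · intro k w hw; rw [getD_replicate_empty] at hw; exact absurd hw (by simp)
      · intro k; rw [getD_replicate_empty]; simp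
      · intro i hi; simp at hi
  | cons t ts' ih =>
      intro ws hlen H
      cases ws with
      | nil => simp at hlen
      | cons w ws' =>
          have hlen' : ws'.length = ts'.length := by simpa using hlen
          obtain ⟨γh, hhlen, hhmem, hhcard, hhps⟩ := H 0 (by simp)
          obtain ⟨γt, htlen, htmem, htcard, htps⟩ :=
            ih ws' hlen' (fun i hi => by
              obtain ⟨γs, h1, h2, h3, h4⟩ := H (i + 1) (by simpa using Nat.succ_lt_succ hi)
              exact ⟨γs, h1, h2, h3, h4⟩)
          have hght : γh.length = γt.length := by omega
          refine ⟨List.zipWith (· ∪ ·) γh γt, by simp [hhlen, htlen], ?_, ?_, ?_⟩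
          · intro k x hx
            rw [getD_zipWith_union hght] at hx
            rcases hx with hx | hx
            · obtain ⟨hsub, hrest⟩ := hhmem k x hx
              exact ⟨⟨0, by simp, hsub⟩, hrest⟩
            · obtain ⟨⟨i, hi, hsub⟩, hrest⟩ := htmem k x hx
              exact ⟨⟨i + 1, by simpa using Nat.succ_lt_succ hi, hsub⟩, hrest⟩
          · intro k
            rw [getD_zipWith_union hght]
            refine ⟨(hhcard k).1.union (htcard k).1, ?_⟩
            refine le_trans (Set.ncard_union_le _ _) ?_
            have h1 : (γh.getD k ∅).ncard ≤ countParam k t := by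
              simpa using (hhcard k).2
            have h2 := (htcard k).2
            simp only [List.map_cons, List.sum_cons]
            omega
          · intro i hi
            have hmono : ∀ (c : List (Set (RTree Δ))), c.length = n → c = γh ∨ c = γt →
                ∀ {u : OT Δ} {v : RTree Δ}, PSub c u v →
                  PSub (List.zipWith (· ∪ ·) γh γt) u v := by
              intro c hc hcase u v hp
              refine psub_mono (fun j β hj => ?_) hp
              have hjlt : j < c.length := by
                by_contra hcj
                rw [List.getElem?_eq_none (by omega)] at hj
                simp at hj
              refine ⟨γh.getD j ∅ ∪ γt.getD j ∅, getElem?_zipWith_union hght (by omega), ?_⟩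
              have hbj : c.getD j ∅ = β := by rw [List.getD_eq_getElem?_getD, hj]; rfl
              rcases hcase with rfl | rfl
              · exact hbj ▸ Set.subset_union_left
              · exact hbj ▸ Set.subset_union_right
            cases i with
            | zero => exact hmono γh hhlen (Or.inl rfl) hhps
            | succ i' => exact hmono γt htlen (Or.inr rfl) (htps i' (by simpa using hi))

theorem compsub_extract {rsel : Q → Γ → List (RTree Γ) → Set (Rhs Δ Q)}
    {βs : List (Set (RTree Δ))} :
    ∀ (t₀ : OT Δ) {us : List (ST Γ Δ Q)} {v : RTree Δ}, CompSub rsel us βs t₀ v →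
    ∃ γs : List (Set (RTree Δ)), γs.length = us.length ∧
      (∀ k w, w ∈ γs.getD k ∅ → RTree.Subtree w v ∧
        ∃ st u', us[k]? = some st ∧ SemOI rsel st u' ∧ PSub βs u' w) ∧
      (∀ k, (γs.getD k ∅).Finite ∧ (γs.getD k ∅).ncard ≤ countParam k t₀) ∧
      PSub γs t₀ v := by
  refine RTree.strongInd (P := fun t₀ => ∀ {us v}, CompSub rsel us βs t₀ v →
    ∃ γs : List (Set (RTree Δ)), γs.length = us.length ∧
      (∀ k w, w ∈ γs.getD k ∅ → RTree.Subtree w v ∧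
        ∃ st u', us[k]? = some st ∧ SemOI rsel st u' ∧ PSub βs u' w) ∧
      (∀ k, (γs.getD k ∅).Finite ∧ (γs.getD k ∅).ncard ≤ countParam k t₀) ∧
      PSub γs t₀ v) (fun l ts iht us v hc => ?_)
  cases hc with
  | param h hsem hp =>
      rename_i i st u'
      have hi : i < us.length := by
        by_contra hc'
        rw [List.getElem?_eq_none (by omega)] at h
        simp at h
      refine ⟨List.ofFn (n := us.length) (fun j => if j.1 = i then ({v} : Set (RTree Δ)) else ∅),
        by simp, ?_, ?_, ?_⟩
      · intro k x hx
        rcases lt_or_ge k us.length with hk | hk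
        · rw [List.getD_eq_getElem _ _ (by simpa using hk)] at hx
          simp only [List.getElem_ofFn] at hx
          by_cases hki : k = i
          · simp only [hki, if_pos rfl, Set.mem_singleton_iff] at hx
            subst hx
            exact ⟨RTree.Subtree.refl _, st, u', by rw [hki]; exact h, hsem, hp⟩
          · simp [hki] at hx
        · rw [List.getD_eq_default _ _ (by simpa using hk)] at hx
          exact absurd hx (by simp)
      · intro k
        rw [countParam_param]
        rcases lt_or_ge k us.length with hk | hk
        · rw [List.getD_eq_getElem _ _ (by simpa using hk)]
          simp only [List.getElem_ofFn]
          by_cases hki : k = i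
          · subst hki
            simp [Set.ncard_singleton]
          · have : i ≠ k := fun hh => hki hh.symm
            simp [hki, this]
        · rw [List.getD_eq_default _ _ (by simpa using hk)]
          simp
      · refine PSub.param (β := {v}) ?_ rfl
        rw [List.getElem?_eq_getElem (by simpa using hi)]
        simp
  | out hlen h =>
      rename_i d ws
      obtain ⟨γs, h1, h2, h3, h4⟩ :=
        combine_gammas (Rest := fun k w => ∃ st u', us[k]? = some st ∧ SemOI rsel st u' ∧
          PSub βs u' w) ts ws hlen (fun i hi => by
            obtain ⟨γs, g1, g2, g3, g4⟩ := iht (ts[i]'hi) (List.getElem_mem hi) (h ⟨i, hi⟩)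
            exact ⟨γs, g1, g2, g3, g4⟩)
      refine ⟨γs, h1, ?_, ?_, ?_⟩
      · intro k w hw
        obtain ⟨⟨i, hi, hsub⟩, hrest⟩ := h2 k w hw
        exact ⟨Subtree.trans' hsub (Subtree.of_mem (List.getElem_mem hi)), hrest⟩
      · intro k
        rw [countParam_out]
        exact h3 k
      · exact PSub.out hlen (fun i => h4 i.1 i.isLt)

theorem fwdP (M : MTT Γ Δ Q) (c : ℕ) (hfc : FinCopyP M c) (t : RTree Δ) :
    ∀ (ss : List (RTree Γ)), (∀ s ∈ ss, s.Wf M.rankΓ) →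
    ∀ (m : ℕ) (r : Rhs Δ Q), RhsWf M.rankΔ M.rankQ ss.length m r →
    ∀ (βs : List (Set (RTree Δ))) (u : OT Δ) (v : RTree Δ),
      SemOI M.sel (substX ss r) u → PSub βs u v → RTree.Subtree v t →
      FPredOI t βs (ss.attach.map (fun x => runOI M.rankQ M.sel t c x.1)) r v := by
  intro ss hwfss m r hr
  induction hr with
  | out hlend hwfs ih =>
      rename_i d rs
      intro βs u v hsem hps hsub
      rw [substX_node] at hsem
      cases hsem with
      | out hlen2 hptw =>
          rename_i ts
          cases hps with
          | out hlen3 hps2 =>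
              rename_i ws
              have hlen2' : ts.length = rs.length := by simpa using hlen2
              refine FPredOI.out (hlen := by omega) (fun i => ?_)
              have hi1 : i.1 < (rs.map (substX ss)).length := by simp
              have hsem_i := hptw ⟨i.1, hi1⟩
              have hmap : (rs.map (substX ss)).get ⟨i.1, hi1⟩ = substX ss (rs.get i) := by
                simp
              rw [hmap] at hsem_i
              have hi2 : i.1 < ts.length := by omega
              have hps_i := hps2 ⟨i.1, hi2⟩
              have hi3 : i.1 < ws.length := by omega
              have hsubw : RTree.Subtree (ws.get ⟨i.1, hi3⟩) t :=
                Subtree.trans' (Subtree.of_mem (List.get_mem ws ⟨i.1, hi3⟩)) hsub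
              exact ih (rs.get i) (List.get_mem rs i) βs (ts.get ⟨i.1, hi2⟩)
                (ws.get ⟨i.1, hi3⟩) hsem_i hps_i hsubw
  | call hxk hlenQ hwfs ih =>
      rename_i q' x rs
      intro βs u v hsem hps hsub
      rw [substX_node] at hsem
      have hsx : RLab.subst (Δ := Δ) (Q := Q) ss (.call q' x) = .call q' (ss[x]'hxk) := by
        simp [RLab.subst, List.getElem?_eq_getElem hxk]
      rw [hsx] at hsem
      cases hE : ss[x]'hxk with
      | node σ' ss' =>
      rw [hE] at hsem
      cases hsem with
      | call hr' h₀ hois =>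
          rename_i r' t₀
          have hcomp : CompSub M.sel (rs.map (substX ss)) βs t₀ v := comp_intro _ hois hps
          obtain ⟨γs, hγlen, hγmem, hγcard, hγps⟩ := compsub_extract _ hcomp
          have hγlen' : γs.length = rs.length := by simpa using hγlen
          have hwfx : (RTree.node σ' ss').Wf M.rankΓ := hE ▸ hwfss _ (List.getElem_mem hxk)
          have hwfss' : ∀ s ∈ ss', s.Wf M.rankΓ := by
            cases hwfx with | node _ h => exact h
          have hlenσ : ss'.length = M.rankΓ σ' := by
            cases hwfx with | node h _ => exact h
          have hrw : RhsWf M.rankΔ M.rankQ ss'.length (M.rankQ q') r' := by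
            have h1 := M.rules_wf q' σ' r' hr'
            rwa [← hlenσ] at h1
          have hplt : PLT (M.rankQ q') t₀ := sem_plt h₀ (rhsWf_splt hrw ss' le_rfl)
          have hsemPA : SemOI M.sel
              (.node (.call q' (.node σ' ss')) (paramArgs (M.rankQ q'))) t₀ :=
            SemOI.call hr' h₀ (oisub_paramArgs hplt)
          have hFP' : FPredOI t γs (ss'.attach.map (fun y => runOI M.rankQ M.sel t c y.1)) r' v :=
            fwdP M c hfc t ss' hwfss' (M.rankQ q') r' hrw γs t₀ v h₀ hγps hsub
          have hrun : (q', γs, v) ∈ runOI M.rankQ M.sel t c (.node σ' ss') := by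
            rw [runOI]
            refine ⟨by simpa using hγlen'.trans hlenQ, ?_, hsub, r', hr', hFP'⟩
            intro β hβ
            obtain ⟨k, hk, rfl⟩ := List.mem_iff_getElem.1 hβ
            have hgd : γs.getD k ∅ = γs[k] := List.getD_eq_getElem _ _ hk
            constructor
            · intro w hw
              exact Subtree.trans' (hγmem k w (by rw [hgd]; exact hw)).1 hsub
            · have hk' : k < γs.length := hk
              have hkq : k < M.rankQ q' := by omega
              have hb1 := (hγcard k).2
              have hb2 := hfc q' (.node σ' ss') hwfx t₀ hsemPA k hkq
              rw [← hgd]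
              omega
          refine FPredOI.call γs hγlen' ?_ ?_
          · rw [attach_map_getD ss _ hxk, hE]
            exact hrun
          · intro i w hw
            have hlt : i.1 < γs.length := by omega
            have hwk : w ∈ γs.getD i.1 ∅ := by
              rw [List.getD_eq_getElem _ _ hlt]
              exact hw
            obtain ⟨hsubw, st, u', hst, hsem', hps'⟩ := hγmem i.1 w hwk
            have hst' : st = substX ss (rs.get i) := by
              rw [List.getElem?_eq_getElem (by simpa using i.isLt)] at hst
              simpa using hst.symm
            rw [hst'] at hsem'
            exact ih (rs.get i) (List.get_mem rs i) βs u' w hsem' hps'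
              (Subtree.trans' hsubw hsub)
  | param hi =>
      rename_i i0
      intro βs u v hsem hps hsub
      rw [substX_node] at hsem
      cases hsem with
      | param =>
          cases hps with
          | param h hw => exact FPredOI.param h hw
termination_by ss => sizeOf ss
decreasing_by
  have h1 := List.sizeOf_lt_of_mem (List.getElem_mem hxk)
  rw [hE] at h1
  simp only [RTree.node.sizeOf_spec] at h1
  omega

theorem bwdP (M : MTT Γ Δ Q) (c : ℕ) (t : RTree Δ) :
    ∀ (ss : List (RTree Γ)), (∀ s ∈ ss, s.Wf M.rankΓ) →
    ∀ (m : ℕ) (r : Rhs Δ Q), RhsWf M.rankΔ M.rankQ ss.length m r →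
    ∀ (βs : List (Set (RTree Δ))) (v : RTree Δ),
      FPredOI t βs (ss.attach.map (fun x => runOI M.rankQ M.sel t c x.1)) r v →
      ∃ u, SemOI M.sel (substX ss r) u ∧ PLT m u ∧ PSub βs u v := by
  intro ss hwfss m r hr βs v hFP
  induction hFP with
  | param h hv =>
      rename_i i0 v0 β
      refine ⟨.node (.param i0) [], ?_, ?_, PSub.param h hv⟩
      · rw [substX_node]
        exact SemOI.param i0
      · cases hr with
        | param hi => exact PLT.param hi
  | out hlen h ih =>
      rename_i d rs ws
      have hwfs : ∀ r' ∈ rs, RhsWf M.rankΔ M.rankQ ss.length m r' := by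
        cases hr with
        | out _ hws => exact hws
      have ihx : ∀ i : Fin rs.length, ∃ u, SemOI M.sel (substX ss (rs.get i)) u ∧
          PLT m u ∧ PSub βs u (ws.get (i.cast hlen.symm)) :=
        fun i => ih i (hwfs _ (List.get_mem rs i))
      choose f hf1 hf2 hf3 using ihx
      refine ⟨.node (.out d) (List.ofFn f), ?_, PLT.out (fun x hx => ?_), ?_⟩
      · rw [substX_node]
        refine SemOI.out (by simp) (fun i => ?_)
        have hi1 : i.1 < rs.length := by simpa using i.isLt
        have hm : (rs.map (substX ss)).get i = substX ss (rs.get ⟨i.1, hi1⟩) := by simp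
        rw [hm]
        have hof : (List.ofFn f).get (i.cast (by simp)) = f ⟨i.1, hi1⟩ := by
          rw [List.get_ofFn]
          exact congrArg f (Fin.ext rfl)
        rw [hof]
        exact hf1 _
      · obtain ⟨i, rfl⟩ := List.mem_ofFn.1 hx
        exact hf2 i
      · refine PSub.out (by simpa using hlen) (fun i => ?_)
        have hi1 : i.1 < rs.length := by simpa using i.isLt
        have hof : (List.ofFn f).get i = f ⟨i.1, hi1⟩ := by
          rw [List.get_ofFn]
          exact congrArg f (Fin.ext rfl)
        rw [hof]
        exact hf3 ⟨i.1, hi1⟩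
  | call γs hlenγ ha h ih =>
      rename_i q' x rs v'
      have hcall : x < ss.length ∧ rs.length = M.rankQ q' ∧
          ∀ r' ∈ rs, RhsWf M.rankΔ M.rankQ ss.length m r' := by
        cases hr with
        | call hx hlen2 hws => exact ⟨hx, hlen2, hws⟩
      obtain ⟨hx, hlenq, hwfs⟩ := hcall
      rw [attach_map_getD ss _ hx] at ha
      cases hE : ss[x]'hx with
      | node σ' ss' =>
      rw [hE, runOI] at ha
      obtain ⟨hγlen, hsmall, hsubv, r'', hr'', hFP''⟩ := ha
      have hγlen' : γs.length = M.rankQ q' := by simpa using hγlen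
      have hwfx : (RTree.node σ' ss').Wf M.rankΓ := hE ▸ hwfss _ (List.getElem_mem hx)
      have hwfss' : ∀ s ∈ ss', s.Wf M.rankΓ := by
        cases hwfx with | node _ h2 => exact h2
      have hlenσ : ss'.length = M.rankΓ σ' := by
        cases hwfx with | node h2 _ => exact h2
      have hrw : RhsWf M.rankΔ M.rankQ ss'.length (M.rankQ q') r'' := by
        have h1 := M.rules_wf q' σ' r'' hr''
        rwa [← hlenσ] at h1
      obtain ⟨t₀, hsem₀, hplt₀, hps₀⟩ :=
        bwdP M c t ss' hwfss' (M.rankQ q') r'' hrw γs v' hFP''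
      have hlenargs : γs.length = (rs.map (substX ss)).length := by simp; omega
      have hst : ∀ (k : ℕ) (hk : k < (rs.map (substX ss)).length),
          ∀ w ∈ γs.getD k ∅, ∃ u', SemOI M.sel ((rs.map (substX ss))[k]'hk) u' ∧
            PLT m u' ∧ PSub βs u' w := by
        intro k hk w hw
        have hkr : k < rs.length := by simpa using hk
        have hkγ : k < γs.length := by omega
        have hw' : w ∈ γs.get ((⟨k, hkr⟩ : Fin rs.length).cast hlenγ.symm) := by
          rw [List.getD_eq_getElem _ _ hkγ] at hw
          exact hw
        obtain ⟨u', h1, h2, h3⟩ := ih ⟨k, hkr⟩ w hw' (hwfs _ (List.get_mem rs ⟨k, hkr⟩))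
        refine ⟨u', ?_, h2, h3⟩
        have : (rs.map (substX ss))[k]'hk = substX ss (rs.get ⟨k, hkr⟩) := by simp
        rw [this]
        exact h1
      obtain ⟨u, hois, hpltu, hpsu⟩ := psub_compose hlenargs hst hps₀
      refine ⟨u, ?_, hpltu, hpsu⟩
      rw [substX_node]
      have hsx : RLab.subst (Δ := Δ) (Q := Q) ss (.call q' x) = .call q' (ss[x]'hx) := by
        simp [RLab.subst, List.getElem?_eq_getElem hx]
      rw [hsx, hE]
      exact SemOI.call hr'' hsem₀ hois
termination_by ss => sizeOf ss
decreasing_by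
  have h1 := List.sizeOf_lt_of_mem (List.getElem_mem hx)
  rw [hE] at h1
  simp only [RTree.node.sizeOf_spec] at h1
  omega

theorem main_aux {Γ Δ Q : Type}
    (M : MTT Γ Δ Q) (c : ℕ) (hfc : FinCopyP M c)
    (t : RTree Δ) (ht : t.Wf M.rankΔ)
    (s : RTree Γ) (hs : s.Wf M.rankΓ) :
    (s, t) ∈ tauOI M.rankΓ M.rankΔ M.sel M.q₀ ↔
      (M.q₀, ([] : List (Set (RTree Δ))), t) ∈ runOI M.rankQ M.sel t c s := by
  cases s with
  | node σ ss =>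
  have hwfss : ∀ x ∈ ss, x.Wf M.rankΓ := by
    cases hs with | node _ h => exact h
  have hlenσ : ss.length = M.rankΓ σ := by
    cases hs with | node h _ => exact h
  have hparam0 : (paramArgs 0 : List (ST Γ Δ Q)) = [] := rfl
  constructor
  · rintro ⟨_, _, hsem⟩
    cases hsem with
    | call hr h₀ hois =>
        rename_i r t₀
        have hEt : embed t = t₀ := oisub_nil_eq t₀ hois
        have hrw : RhsWf M.rankΔ M.rankQ ss.length (M.rankQ M.q₀) r := by
          have h1 := M.rules_wf M.q₀ σ r hr
          rwa [← hlenσ] at h1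
        have hps : PSub ([] : List (Set (RTree Δ))) t₀ t := hEt ▸ psub_embed t
        have hFP := fwdP M c hfc t ss hwfss (M.rankQ M.q₀) r hrw [] t₀ t h₀ hps
          (RTree.Subtree.refl t)
        rw [runOI]
        exact ⟨by simp [M.q₀_rank], by simp, RTree.Subtree.refl t, r, hr, hFP⟩
  · intro hmem
    rw [runOI] at hmem
    obtain ⟨hlen0, hsm, hsubt, r, hr, hFP⟩ := hmem
    have hrw : RhsWf M.rankΔ M.rankQ ss.length (M.rankQ M.q₀) r := by
      have h1 := M.rules_wf M.q₀ σ r hr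
      rwa [← hlenσ] at h1
    obtain ⟨u, hsem, hplt, hps⟩ := bwdP M c t ss hwfss (M.rankQ M.q₀) r hrw [] t hFP
    have hemb : u = embed t := psub_nil hps
    refine ⟨hs, ht, ?_⟩
    rw [← hemb]
    have hplt0 : PLT 0 u := by
      rw [← M.q₀_rank]
      exact hplt
    have hois : OISub M.sel ([] : List (ST Γ Δ Q)) u u := by
      rw [← hparam0]
      exact oisub_paramArgs hplt0
    exact SemOI.call hr hsem hois

/-- Let `M` be an mtt that is finite copying in the parameters
with copying bound `c` and let `t ∈ T_Δ` be a fixed output tree.  Then for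
every `s ∈ T_Σ`: `(s,t) ∈ τ_{OI,M}` iff `(q0, (), t) ∈ run_OI(s)`, where `()`
is the empty parameter vector and `t` itself is the root subtree of `t`. -/
theorem translation_membership_iff_runOI {Γ Δ Q : Type}
    [Fintype Γ] [Fintype Δ] [Fintype Q]
    (M : MTT Γ Δ Q) (c : ℕ) (hfc : FinCopyP M c)
    (t : RTree Δ) (ht : t.Wf M.rankΔ)
    (s : RTree Γ) (hs : s.Wf M.rankΓ) :
    (s, t) ∈ tauOI M.rankΓ M.rankΔ M.sel M.q₀ ↔
      (M.q₀, ([] : List (Set (RTree Δ))), t) ∈ runOI M.rankQ M.sel t c s :=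
  main_aux M c hfc t ht s hs

end MttF
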